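/- Let δ₁ and δ₂ be positive definite self-adjoint endomorphisms of V, and for i = 1, 2 define η_i : V × V → V by η_i(x, y) = δ_i(π(δ_i(x), δ_i(y))). Then there exists a linear isometry σ of V with σ(η₁(x, y)) = η₂(σ(x), σ(y)) for all x, y ∈ V if and only if there exists σ ∈ G₂ such that δ₁ = σ⁻¹ ∘ δ₂ ∘ σ. -/

import Mathlib

open scoped RealInnerProductSpace


section VP

variable {V : Type*} [NormedAddCommGroup V] [InnerProductSpace ℝ V]

lemma rips {x : V} (h : x ≠ 0) : 0 < ⟪x, x⟫ := by
  rw [real_inner_self_eq_norm_sq]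
  have : 0 < ‖x‖ := norm_pos_iff.mpr h
  positivity

variable (π : V →ₗ[ℝ] V →ₗ[ℝ] V) (hπalt : ∀ x : V, π x x = 0)
    (hπvp : ∀ u v : V, Orthonormal ℝ ![u, v] → Orthonormal ℝ ![u, v, π u v])

lemma onpair {u v : V} (hu : ‖u‖ = 1) (hv : ‖v‖ = 1) (huv : ⟪u, v⟫ = 0) :
    Orthonormal ℝ ![u, v] := by
  have hvu : ⟪v, u⟫ = 0 := by rw [real_inner_comm]; exact huv
  rw [orthonormal_iff_ite]
  intro i j
  fin_cases i <;> fin_cases j <;>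
    simp [real_inner_self_eq_norm_sq, hu, hv, huv, hvu]

include hπalt in
lemma pi_antisym (x y : V) : π x y = - π y x := by
  have h := hπalt (x + y)
  simp only [map_add, LinearMap.add_apply, hπalt] at h
  have h' : π y x + π x y = 0 := by
    rw [← h]; abel
  rw [eq_neg_iff_add_eq_zero, add_comm]
  exact h' 

include hπvp in
lemma pi_unit_props {u v : V} (h : Orthonormal ℝ ![u, v]) :
    ‖π u v‖ = 1 ∧ ⟪π u v, u⟫ = 0 ∧ ⟪π u v, v⟫ = 0 := by
  have h3 := hπvp u v h
  rw [orthonormal_iff_ite] at h3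
  have h00 := h3 2 2
  have h20 := h3 2 0
  have h21 := h3 2 1
  simp at h00 h20 h21
  refine ⟨?_, h20, h21⟩
  have : ‖π u v‖ ^ 2 = 1 := by
    rcases h00 with h | h <;> rw [h] <;> norm_num
  nlinarith [norm_nonneg (π u v)]

include hπalt hπvp in
lemma pi_orth (x y : V) : ⟪π x y, x⟫ = 0 := by
  by_cases hx : x = 0
  · simp [hx]
  have hxx : (⟪x, x⟫ : ℝ) ≠ 0 := ne_of_gt (rips hx)
  set c : ℝ := ⟪x, y⟫ / ⟪x, x⟫ with hc
  set y' : V := y - c • x with hy'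
  have hxy' : ⟪x, y'⟫ = 0 := by
    simp [hy', inner_sub_right, real_inner_smul_right, hc]
    field_simp
    ring
  have hpi : π x y = π x y' := by
    simp [hy', map_sub, map_smul, hπalt]
  by_cases hy0 : y' = 0
  · simp [hpi, hy0]
  · set u : V := ‖x‖⁻¹ • x with hu
    set v : V := ‖y'‖⁻¹ • y' with hv
    have hxn : ‖x‖ ≠ 0 := by simpa using hx
    have hyn : ‖y'‖ ≠ 0 := by simpa using hy0
    have hon : Orthonormal ℝ ![u, v] := by
      apply onpair
      · simp [hu, norm_smul, inv_mul_cancel₀ hxn]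
      · simp [hv, norm_smul, inv_mul_cancel₀ hyn]
      · simp [hu, hv, real_inner_smul_left, real_inner_smul_right, hxy']
    obtain ⟨-, h2, -⟩ := pi_unit_props π hπvp hon
    have hexp2 : π u v = (‖x‖⁻¹ * ‖y'‖⁻¹) • π x y' := by
      simp [hu, hv, map_smul, smul_smul]
      rw [mul_comm]
    have hval : (⟪π u v, u⟫ : ℝ) = (‖x‖⁻¹ * ‖y'‖⁻¹ * ‖x‖⁻¹) * ⟪π x y', x⟫ := by
      rw [hexp2, hu, real_inner_smul_left, real_inner_smul_right]; ring
    rw [h2] at hval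
    rw [hpi]
    have hco : (‖x‖⁻¹ * ‖y'‖⁻¹ * ‖x‖⁻¹) ≠ 0 := by
      simp [hxn, hyn]
    exact ((mul_eq_zero.mp hval.symm).resolve_left hco)

include hπalt hπvp in
lemma pi_orth' (x y : V) : ⟪π x y, y⟫ = 0 := by
  rw [pi_antisym π hπalt x y, inner_neg_left, pi_orth π hπalt hπvp y x, neg_zero]

include hπalt hπvp in
lemma pi_norm (x y : V) : ⟪π x y, π x y⟫ = ⟪x, x⟫ * ⟪y, y⟫ - ⟪x, y⟫ ^ 2 := by
  by_cases hx : x = 0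
  · simp [hx]
  have hxx : (⟪x, x⟫ : ℝ) ≠ 0 := ne_of_gt (rips hx)
  set c : ℝ := ⟪x, y⟫ / ⟪x, x⟫ with hc
  set y' : V := y - c • x with hy'
  have hxy' : ⟪x, y'⟫ = 0 := by
    simp [hy', inner_sub_right, real_inner_smul_right, hc]
    field_simp
    ring
  have hpi : π x y = π x y' := by
    simp [hy', map_sub, map_smul, hπalt]
  have hyy : (⟪y, y⟫ : ℝ) = c ^ 2 * ⟪x, x⟫ + ⟪y', y'⟫ := by
    have : y = c • x + y' := by simp [hy']
    have h0 : (⟪y', x⟫ : ℝ) = 0 := by rw [real_inner_comm]; exact hxy'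
    rw [this]
    simp [h0, inner_add_add_self, real_inner_smul_left, real_inner_smul_right, hxy',
      real_inner_comm y' x]
    rw [norm_add_sq_real, real_inner_smul_left, hxy', norm_smul, mul_pow, Real.norm_eq_abs, sq_abs]
    ring
  have hxy : (⟪x, y⟫ : ℝ) = c * ⟪x, x⟫ := by
    rw [hc]; field_simp
  rw [hpi, hxy, hyy]
  by_cases hy0 : y' = 0
  · simp [hy0]; ring
  · set u : V := ‖x‖⁻¹ • x with hu
    set v : V := ‖y'‖⁻¹ • y' with hv
    have hxn : ‖x‖ ≠ 0 := by simpa using hx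
    have hyn : ‖y'‖ ≠ 0 := by simpa using hy0
    have hon : Orthonormal ℝ ![u, v] := by
      apply onpair
      · simp [hu, norm_smul, inv_mul_cancel₀ hxn]
      · simp [hv, norm_smul, inv_mul_cancel₀ hyn]
      · simp [hu, hv, real_inner_smul_left, real_inner_smul_right, hxy']
    obtain ⟨h1, -, -⟩ := pi_unit_props π hπvp hon
    have hexp2 : π u v = (‖x‖⁻¹ * ‖y'‖⁻¹) • π x y' := by
      simp [hu, hv, map_smul, smul_smul]
      rw [mul_comm]
    have h1' : (⟪π u v, π u v⟫ : ℝ) = 1 := by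
      rw [real_inner_self_eq_norm_sq, h1]; norm_num
    rw [hexp2, real_inner_smul_left, real_inner_smul_right] at h1'
    have hxx2 : (⟪x, x⟫ : ℝ) = ‖x‖ ^ 2 := real_inner_self_eq_norm_sq x
    have hyy2 : (⟪y', y'⟫ : ℝ) = ‖y'‖ ^ 2 := real_inner_self_eq_norm_sq y'
    have : (⟪π x y', π x y'⟫ : ℝ) = ‖x‖ ^ 2 * ‖y'‖ ^ 2 := by
      field_simp at h1'
      nlinarith [h1']
    rw [this, hxx2, hyy2]
    ring

include hπalt hπvp in
lemma pi_polar (x y z : V) :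
    ⟪π x y, π x z⟫ = ⟪x, x⟫ * ⟪y, z⟫ - ⟪x, y⟫ * ⟪x, z⟫ := by
  have h1 := pi_norm π hπalt hπvp x (y + z)
  have h2 := pi_norm π hπalt hπvp x y
  have h3 := pi_norm π hπalt hπvp x z
  simp only [map_add, inner_add_add_self, inner_add_right, inner_add_left] at h1
  have e1 : (⟪π x z, π x y⟫ : ℝ) = ⟪π x y, π x z⟫ := real_inner_comm _ _
  have e2 : (⟪z, y⟫ : ℝ) = ⟪y, z⟫ := real_inner_comm _ _
  linear_combination (h1 - h2 - h3 - e1 + (⟪x, x⟫ : ℝ) * e2) / 2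

end VP


set_option linter.unusedSectionVars false

section AUX

variable {V : Type*} [NormedAddCommGroup V] [InnerProductSpace ℝ V]
  [FiniteDimensional ℝ V]

/-- An orthonormal family of size = finrank is an orthonormal basis. -/
noncomputable def mkONB {n : ℕ} (hn : 0 < n) (hdim : Module.finrank ℝ V = n)
    (v : Fin n → V) (h : Orthonormal ℝ v) : OrthonormalBasis (Fin n) ℝ V :=
  OrthonormalBasis.mk h (by
    have : Nonempty (Fin n) := ⟨⟨0, hn⟩⟩
    exact ge_of_eq (h.linearIndependent.span_eq_top_of_card_eq_finrank
      (by simpa using hdim.symm)))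

lemma mkONB_apply {n : ℕ} (hn : 0 < n) (hdim : Module.finrank ℝ V = n)
    (v : Fin n → V) (h : Orthonormal ℝ v) (i : Fin n) :
    mkONB hn hdim v h i = v i := by
  simp [mkONB]

lemma det_eq_prod {n : ℕ} (b : Module.Basis (Fin n) ℝ V) (f : V →ₗ[ℝ] V) (ν : Fin n → ℝ)
    (h : ∀ j, f (b j) = ν j • b j) : LinearMap.det f = ∏ j, ν j := by
  rw [← LinearMap.det_toMatrix b, ← Matrix.det_diagonal]
  congr 1
  ext i j
  rw [LinearMap.toMatrix_apply, h j, map_smul, b.repr_self]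
  by_cases hij : i = j
  · subst hij; simp
  · simp [Matrix.diagonal_apply_ne _ hij, Finsupp.single_apply, Ne.symm hij]

/-- A vector is zero if orthogonal to every element of an orthonormal basis. -/
lemma eq_of_inner_onb {n : ℕ} (b : OrthonormalBasis (Fin n) ℝ V) (x y : V)
    (h : ∀ i, ⟪b i, x⟫ = ⟪b i, y⟫) : x = y := by
  have hx := b.sum_repr x
  have hy := b.sum_repr y
  rw [← hx, ← hy]
  refine Finset.sum_congr rfl fun i _ => ?_
  rw [b.repr_apply_apply, b.repr_apply_apply, h i]

/-- Uniqueness of positive square roots. -/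
lemma sq_uniq (A B : V →ₗ[ℝ] V) (hA : A.IsSymmetric) (hB : B.IsSymmetric)
    (hApos : ∀ x : V, x ≠ 0 → 0 < ⟪A x, x⟫) (hBpos : ∀ x : V, x ≠ 0 → 0 < ⟪B x, x⟫)
    (h : ∀ x, A (A x) = B (B x)) : A = B := by
  set u := hA.eigenvectorBasis (n := Module.finrank ℝ V) rfl with hudef
  set a := hA.eigenvalues (n := Module.finrank ℝ V) rfl with hadef
  have hAu : ∀ i, A (u i) = a i • u i := fun i => hA.apply_eigenvectorBasis rfl i
  have hne : ∀ i, u i ≠ 0 := fun i => u.orthonormal.ne_zero i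
  have hnorm : ∀ i, (⟪u i, u i⟫ : ℝ) = 1 := fun i => by
    rw [real_inner_self_eq_norm_sq, u.orthonormal.1 i]; norm_num
  have hapos : ∀ i, 0 < a i := by
    intro i
    have h1 : (⟪A (u i), u i⟫ : ℝ) = a i := by
      rw [hAu i, real_inner_smul_left, hnorm i, mul_one]
    rw [← h1]; exact hApos _ (hne i)
  have hBu : ∀ i, B (u i) = a i • u i := by
    intro i
    by_contra hw
    set w := B (u i) - a i • u i with hwdef
    have hw0 : w ≠ 0 := fun hz => hw (by rwa [hwdef, sub_eq_zero] at hz)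
    have hBw : B w = -(a i) • w := by
      have h2 : B (B (u i)) = (a i)^2 • u i := by
        rw [← h (u i), hAu i, map_smul, hAu i, smul_smul, sq]
      rw [hwdef, map_sub, map_smul, h2]
      module
    have := hBpos w hw0
    rw [hBw, real_inner_smul_left] at this
    have hwn : 0 < (⟪w, w⟫ : ℝ) := rips hw0
    nlinarith [hapos i]
  apply Module.Basis.ext u.toBasis
  intro i
  rw [OrthonormalBasis.coe_toBasis, hAu i, hBu i]

end AUX

lemma pow_one_of_pos {P : ℝ} {n : ℕ} (hn : n ≠ 0) (h : 0 ≤ P) (h1 : P ^ n = 1) : P = 1 := by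
  rcases lt_trichotomy P 1 with hlt | heq | hgt
  · exfalso
    have : P ^ n < 1 ^ n := pow_lt_pow_left₀ hlt h hn
    simp at this; linarith
  · exact heq
  · exfalso
    have : (1:ℝ) ^ n < P ^ n := pow_lt_pow_left₀ hgt (by norm_num) hn
    simp at this; linarith

lemma scalar_key (lam : Fin 7 → ℝ) (hpos : ∀ i, 0 < lam i)
    (heq : ∀ i, (∏ j, lam j) =
      ∏ j, (if j = i then lam i else (lam i * lam j)⁻¹)) :
    ∀ i, lam i = 1 := by
  set P : ℝ := ∏ j, lam j with hP
  have hPpos : 0 < P := Finset.prod_pos (fun j _ => hpos j)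
  have key : ∀ i, lam i ^ 4 * P ^ 2 = 1 := by
    intro i
    have h1 := heq i
    have hmem : i ∈ Finset.univ := Finset.mem_univ (α := Fin 7) i
    rw [← Finset.mul_prod_erase _ _ hmem, if_pos rfl] at h1
    have h2 : ∏ j ∈ Finset.univ.erase i, (if j = i then lam i else (lam i * lam j)⁻¹)
        = ∏ j ∈ Finset.univ.erase i, (lam i * lam j)⁻¹ := by
      apply Finset.prod_congr rfl
      intro j hj
      rw [if_neg (Finset.ne_of_mem_erase hj)]
    rw [h2] at h1
    have hcard : (Finset.univ.erase i).card = 6 := by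
      rw [Finset.card_erase_of_mem hmem]
      simp
    have h3 : ∏ j ∈ Finset.univ.erase i, (lam i * lam j)⁻¹
        = (lam i ^ 6 * ∏ j ∈ Finset.univ.erase i, lam j)⁻¹ := by
      rw [Finset.prod_inv_distrib, Finset.prod_mul_distrib, Finset.prod_const, hcard]
    have h4 : lam i * ∏ j ∈ Finset.univ.erase i, lam j = P := by
      rw [hP, Finset.mul_prod_erase _ _ hmem]
    have hQ : (0:ℝ) < ∏ j ∈ Finset.univ.erase i, lam j :=
      Finset.prod_pos (fun j _ => hpos j)
    rw [h3] at h1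
    have hl := hpos i
    field_simp at h1
    have h5 : P ^ 2 * lam i ^ 6 = lam i ^ 2 := by
      linear_combination (lam i)^2 * h1 - (P * lam i ^ 6) * h4
    have hl2 : (lam i ^ 2 : ℝ) ≠ 0 := by positivity
    exact mul_left_cancel₀ hl2 (by linear_combination h5)
  have h6 : ∏ i : Fin 7, (lam i ^ 4 * P ^ 2) = 1 := by
    simp [key]
  have h7 : P ^ 18 = 1 := by
    rw [Finset.prod_mul_distrib, Finset.prod_pow, Finset.prod_const] at h6
    simp only [← hP] at h6
    rw [← h6]
    norm_num
    ring
  have hP1 : P = 1 := pow_one_of_pos (by norm_num) (le_of_lt hPpos) h7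
  intro i
  have := key i
  rw [hP1] at this
  norm_num at this
  exact pow_one_of_pos (by norm_num) (le_of_lt (hpos i)) this

theorem stmt19
    {V : Type*} [NormedAddCommGroup V] [InnerProductSpace ℝ V]
    [FiniteDimensional ℝ V] (hdim : Module.finrank ℝ V = 7)
    (π : V →ₗ[ℝ] V →ₗ[ℝ] V) (hπalt : ∀ x : V, π x x = 0)
    (hπvp : ∀ u v : V, Orthonormal ℝ ![u, v] → Orthonormal ℝ ![u, v, π u v])
    (δ₁ δ₂ : V →ₗ[ℝ] V)
    (hδ₁ : LinearMap.IsSymmetric δ₁) (hδ₂ : LinearMap.IsSymmetric δ₂)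
    (hpos₁ : ∀ x : V, x ≠ 0 → 0 < ⟪δ₁ x, x⟫)
    (hpos₂ : ∀ x : V, x ≠ 0 → 0 < ⟪δ₂ x, x⟫) :
    (∃ σ : V ≃ₗᵢ[ℝ] V, ∀ x y : V,
        σ (δ₁ (π (δ₁ x) (δ₁ y))) = δ₂ (π (δ₂ (σ x)) (δ₂ (σ y)))) ↔
    (∃ σ : V ≃ₗᵢ[ℝ] V, (∀ x y : V, σ (π x y) = π (σ x) (σ y)) ∧
        ∀ x : V, δ₁ x = σ.symm (δ₂ (σ x))) := by
  constructor
  · rintro ⟨σ, hσ⟩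
    -- bijectivity of δ₁ and δ₂
    have hker : ∀ (δ : V →ₗ[ℝ] V), (∀ x : V, x ≠ 0 → 0 < ⟪δ x, x⟫) →
        Function.Bijective δ := by
      intro δ hpos
      have hinj : Function.Injective δ := by
        rw [← LinearMap.ker_eq_bot]
        rw [Submodule.eq_bot_iff]
        intro x hx
        by_contra h0
        have := hpos x h0
        rw [LinearMap.mem_ker.mp hx] at this
        simp at this
      exact ⟨hinj, (LinearMap.injective_iff_surjective).mp hinj⟩
    have hbij₁ := hker δ₁ hpos₁
    have hbij₂ := hker δ₂ hpos₂
    set d₁ : V ≃ₗ[ℝ] V := LinearEquiv.ofBijective δ₁ hbij₁ with hd₁def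
    set d₂ : V ≃ₗ[ℝ] V := LinearEquiv.ofBijective δ₂ hbij₂ with hd₂def
    have hd₁ : ∀ x, d₁ x = δ₁ x := fun x => rfl
    have hd₂ : ∀ x, d₂ x = δ₂ x := fun x => rfl
    have hd₁s : ∀ x, δ₁ (d₁.symm x) = x := fun x => d₁.apply_symm_apply x
    set E : V ≃ₗ[ℝ] V := d₁.symm.trans (σ.toLinearEquiv.trans d₂) with hEdef
    have hE : ∀ x, E x = δ₂ (σ (d₁.symm x)) := fun x => rfl
    have hEδ : ∀ x, E (δ₁ x) = δ₂ (σ x) := by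
      intro x
      rw [hE]
      congr 1
      have : d₁.symm (δ₁ x) = x := d₁.symm_apply_apply x
      rw [this]
    -- the fundamental invariance relation
    have R1 : ∀ a b c : V, ⟪π (E a) (E b), E c⟫ = ⟪π a b, c⟫ := by
      intro a b c
      set x := d₁.symm a with hx
      set y := d₁.symm b with hy
      set z := d₁.symm c with hz
      have ha : a = δ₁ x := (hd₁s a).symm
      have hb : b = δ₁ y := (hd₁s b).symm
      have hc : c = δ₁ z := (hd₁s c).symm
      calc ⟪π (E a) (E b), E c⟫
          = ⟪π (δ₂ (σ x)) (δ₂ (σ y)), δ₂ (σ z)⟫ := by rw [hE, hE, hE]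
        _ = ⟪δ₂ (π (δ₂ (σ x)) (δ₂ (σ y))), σ z⟫ := by rw [← hδ₂]
        _ = ⟪σ (δ₁ (π (δ₁ x) (δ₁ y))), σ z⟫ := by rw [hσ]
        _ = ⟪δ₁ (π (δ₁ x) (δ₁ y)), z⟫ := σ.inner_map_map _ _
        _ = ⟪π (δ₁ x) (δ₁ y), δ₁ z⟫ := hδ₁ _ _
        _ = ⟪π a b, c⟫ := by rw [← ha, ← hb, ← hc]
    -- the adjoint machinery
    set k : V →ₗ[ℝ] V := LinearMap.adjoint (E.symm.toLinearMap) with hkdef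
    have hkadj : ∀ x y : V, ⟪k x, y⟫ = ⟪x, E.symm y⟫ := by
      intro x y
      rw [hkdef]
      exact LinearMap.adjoint_inner_left _ y x
    have hkadj' : ∀ x y : V, ⟪x, k y⟫ = ⟪E.symm x, y⟫ := by
      intro x y
      rw [hkdef]
      exact LinearMap.adjoint_inner_right _ x y
    have hk : ∀ a b : V, π (E a) (E b) = k (π a b) := by
      intro a b
      apply ext_inner_right ℝ
      intro v
      rw [hkadj]
      calc ⟪π (E a) (E b), v⟫ = ⟪π (E a) (E b), E (E.symm v)⟫ := by
            rw [E.apply_symm_apply]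
        _ = ⟪π a b, E.symm v⟫ := R1 a b (E.symm v)
    set S : V →ₗ[ℝ] V := LinearMap.adjoint E.toLinearMap ∘ₗ E.toLinearMap with hSdef
    have hSapp : ∀ x y : V, ⟪S x, y⟫ = ⟪E x, E y⟫ := by
      intro x y
      rw [hSdef, LinearMap.comp_apply, LinearMap.adjoint_inner_left]
      rfl
    have hSsym : S.IsSymmetric := by
      intro x y
      have h1 : (⟪x, S y⟫ : ℝ) = ⟪E y, E x⟫ := by rw [real_inner_comm, hSapp]
      rw [hSapp, h1, real_inner_comm]
    have hSpos : ∀ x : V, x ≠ 0 → 0 < ⟪S x, x⟫ := by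
      intro x hx
      rw [hSapp]
      exact rips (by simp [hx])
    have hSQ : ∀ x : V, S (E.symm (k x)) = x := by
      intro x
      apply ext_inner_right ℝ
      intro v
      rw [hSapp, E.apply_symm_apply, hkadj, E.symm_apply_apply]
    -- eigen decomposition
    set u := hSsym.eigenvectorBasis hdim with hudef
    set lam := hSsym.eigenvalues hdim with hlamdef
    have hSu : ∀ i, S (u i) = lam i • u i := by
      intro i
      have h := hSsym.apply_eigenvectorBasis hdim i
      rw [hudef, hlamdef]
      exact_mod_cast h
    have huon := u.orthonormal
    have huon' : ∀ i j : Fin 7, ⟪u i, u j⟫ = if i = j then 1 else 0 :=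
      orthonormal_iff_ite.mp huon
    have hlampos : ∀ i, 0 < lam i := by
      intro i
      have h1 : (⟪S (u i), u i⟫ : ℝ) = lam i := by
        rw [hSu i, real_inner_smul_left, huon' i i, if_pos rfl, mul_one]
      rw [← h1]
      exact hSpos _ (huon.ne_zero i)
    have hSuinv : ∀ i, S ((lam i)⁻¹ • u i) = u i := by
      intro i
      rw [map_smul, hSu i, smul_smul, inv_mul_cancel₀ (ne_of_gt (hlampos i)), one_smul]
    have hEu : ∀ i j : Fin 7, ⟪E (u i), E (u j)⟫ = lam i * (if i = j then 1 else 0) := by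
      intro i j
      rw [← hSapp, hSu i, real_inner_smul_left, huon' i j]
    -- orthonormal bases adapted to each i
    have hwon : ∀ i : Fin 7, Orthonormal ℝ
        (fun j => if j = i then u i else π (u i) (u j)) := by
      intro i
      rw [orthonormal_iff_ite]
      intro j l
      by_cases hj : j = i <;> by_cases hl : l = i
      · rw [if_pos hj, if_pos hl, if_pos (hj.trans hl.symm)]
        simpa using huon' i i
      · rw [if_pos hj, if_neg hl, if_neg (fun h : j = l => hl (h ▸ hj)),
          real_inner_comm]
        exact pi_orth π hπalt hπvp (u i) (u l)
      · rw [if_neg hj, if_pos hl, if_neg (fun h : j = l => hj (h.trans hl))]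
        exact pi_orth π hπalt hπvp (u i) (u j)
      · rw [if_neg hj, if_neg hl, pi_polar π hπalt hπvp (u i) (u j) (u l),
          huon' i i, huon' i j, huon' i l, huon' j l]
        simp [Ne.symm hj, Ne.symm hl]
    set W : (i : Fin 7) → OrthonormalBasis (Fin 7) ℝ V :=
      fun i => mkONB (by norm_num) hdim _ (hwon i) with hWdef
    have hW : ∀ i j : Fin 7, W i j = if j = i then u i else π (u i) (u j) :=
      fun i j => mkONB_apply (by norm_num) hdim _ (hwon i) j
    -- the elements π (u i) (u j) are eigenvectors of S
    have hSp : ∀ i j : Fin 7, j ≠ i →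
        S (π (u i) (u j)) = (lam i * lam j)⁻¹ • π (u i) (u j) := by
      intro i j hij
      set p := π (u i) (u j) with hp
      have hne : lam i * lam j ≠ 0 :=
        ne_of_gt (mul_pos (hlampos i) (hlampos j))
      have hkp : k p = π (E (u i)) (E (u j)) := (hk _ _).symm
      have hQp : E.symm (k p) = (lam i * lam j) • p := by
        apply eq_of_inner_onb (W i)
        intro l
        rw [hW i l]
        by_cases hl : l = i
        · rw [if_pos hl]
          have hup : (⟪u i, p⟫ : ℝ) = 0 := by
            rw [real_inner_comm]; exact pi_orth π hπalt hπvp (u i) (u j)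
          have hL : (⟪u i, E.symm (k p)⟫ : ℝ) = 0 := by
            calc (⟪u i, E.symm (k p)⟫ : ℝ)
                = ⟪S ((lam i)⁻¹ • u i), E.symm (k p)⟫ := by rw [hSuinv i]
              _ = ⟪(lam i)⁻¹ • u i, S (E.symm (k p))⟫ := hSsym _ _
              _ = ⟪(lam i)⁻¹ • u i, p⟫ := by rw [hSQ p]
              _ = (lam i)⁻¹ * ⟪u i, p⟫ := real_inner_smul_left _ _ _
              _ = 0 := by rw [hup, mul_zero]
          rw [hL, real_inner_smul_right, hup, mul_zero]
        · rw [if_neg hl]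
          have hL : (⟪π (u i) (u l), E.symm (k p)⟫ : ℝ)
              = lam i * lam j * (if j = l then 1 else 0) := by
            calc (⟪π (u i) (u l), E.symm (k p)⟫ : ℝ)
                = ⟪E.symm (k p), π (u i) (u l)⟫ := real_inner_comm _ _
              _ = ⟪k p, k (π (u i) (u l))⟫ := by rw [← hkadj']
              _ = ⟪π (E (u i)) (E (u j)), π (E (u i)) (E (u l))⟫ := by
                  rw [hkp, ← hk]
              _ = ⟪E (u i), E (u i)⟫ * ⟪E (u j), E (u l)⟫
                  - ⟪E (u i), E (u j)⟫ * ⟪E (u i), E (u l)⟫ :=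
                  pi_polar π hπalt hπvp _ _ _
              _ = lam i * lam j * (if j = l then 1 else 0) := by
                  rw [hEu i i, hEu j l, hEu i j, hEu i l,
                    if_pos rfl, if_neg (fun h : i = j => hij h.symm),
                    if_neg (fun h : i = l => hl h.symm)]
                  ring
          rw [hL, real_inner_smul_right, hp]
          have hR : (⟪π (u i) (u l), π (u i) (u j)⟫ : ℝ) = if l = j then 1 else 0 := by
            rw [pi_polar π hπalt hπvp _ _ _, huon' i i, huon' l j, huon' i l, huon' i j,
              if_pos rfl, if_neg (fun h : i = l => hl h.symm),
              if_neg (fun h : i = j => hij h.symm)]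
            ring
          rw [hR]
          by_cases hjl : j = l
          · rw [if_pos hjl, if_pos hjl.symm]
          · rw [if_neg hjl, if_neg (fun h : l = j => hjl h.symm)]
      have hSp' : (lam i * lam j) • S p = p := by
        rw [← map_smul, ← hQp, hSQ]
      calc S p = (lam i * lam j)⁻¹ • ((lam i * lam j) • S p) := by
            rw [inv_smul_smul₀ hne]
        _ = (lam i * lam j)⁻¹ • p := by rw [hSp']
    -- determinant computations
    have hdet1 : LinearMap.det S = ∏ i, lam i := by
      apply det_eq_prod u.toBasis S lam
      intro j
      rw [u.coe_toBasis]
      exact hSu j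
    have hdet2 : ∀ i : Fin 7, LinearMap.det S
        = ∏ j, (if j = i then lam i else (lam i * lam j)⁻¹) := by
      intro i
      apply det_eq_prod (W i).toBasis S _
      intro j
      rw [(W i).coe_toBasis, hW i j]
      by_cases hj : j = i
      · subst hj
        rw [if_pos rfl, if_pos rfl]
        exact hSu _
      · rw [if_neg hj, if_neg hj]
        exact hSp i j hj
    have hlam1 : ∀ i, lam i = 1 :=
      scalar_key lam hlampos (fun i => by rw [← hdet1, hdet2 i])
    have hSid : ∀ x, S x = x := by
      have hS : S = LinearMap.id := by
        apply Module.Basis.ext u.toBasis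
        intro i
        rw [u.coe_toBasis, hSu i, hlam1 i, one_smul, LinearMap.id_apply]
      intro x
      rw [hS, LinearMap.id_apply]
    have hEiso : ∀ a b : V, ⟪E a, E b⟫ = ⟪a, b⟫ := fun a b => by
      rw [← hSapp, hSid]
    -- conjugation relation for the squares
    have hDD : ∀ x : V, δ₂ (δ₂ (σ x)) = σ (δ₁ (δ₁ x)) := by
      intro x
      apply ext_inner_right ℝ
      intro v
      have h2 : (⟪δ₂ (σ x), δ₂ (σ (σ.symm v))⟫ : ℝ) = ⟪δ₁ x, δ₁ (σ.symm v)⟫ := by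
        rw [← hEδ, ← hEδ, hEiso]
      rw [σ.apply_symm_apply] at h2
      calc (⟪δ₂ (δ₂ (σ x)), v⟫ : ℝ) = ⟪δ₂ (σ x), δ₂ v⟫ := hδ₂ _ _
        _ = ⟪δ₁ x, δ₁ (σ.symm v)⟫ := h2
        _ = ⟪δ₁ (δ₁ x), σ.symm v⟫ := (hδ₁ _ _).symm
        _ = ⟪σ (δ₁ (δ₁ x)), σ (σ.symm v)⟫ := (σ.inner_map_map _ _).symm
        _ = ⟪σ (δ₁ (δ₁ x)), v⟫ := by rw [σ.apply_symm_apply]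
    -- the conjugated operator
    set B : V →ₗ[ℝ] V :=
      σ.symm.toLinearEquiv.toLinearMap ∘ₗ (δ₂ ∘ₗ σ.toLinearEquiv.toLinearMap) with hBdef
    have hBapp : ∀ x, B x = σ.symm (δ₂ (σ x)) := fun x => rfl
    have hsymminner : ∀ z y : V, ⟪σ.symm z, y⟫ = ⟪z, σ y⟫ := by
      intro z y
      calc (⟪σ.symm z, y⟫ : ℝ) = ⟪σ (σ.symm z), σ y⟫ := (σ.inner_map_map _ _).symm
        _ = ⟪z, σ y⟫ := by rw [σ.apply_symm_apply]
    have hBsym : B.IsSymmetric := by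
      intro x y
      have hr : (⟪x, B y⟫ : ℝ) = ⟪σ x, δ₂ (σ y)⟫ := by
        rw [real_inner_comm, hBapp, hsymminner, real_inner_comm]
      rw [hBapp, hsymminner, hδ₂ (σ x) (σ y), hr]
    have hBpos : ∀ x : V, x ≠ 0 → 0 < ⟪B x, x⟫ := by
      intro x hx
      rw [hBapp, hsymminner]
      exact hpos₂ _ (by simp [hx])
    have hBB : ∀ x, δ₁ (δ₁ x) = B (B x) := by
      intro x
      have h1 : B (B x) = σ.symm (δ₂ (δ₂ (σ x))) := by
        rw [hBapp, hBapp, σ.apply_symm_apply]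
      rw [h1, hDD, σ.symm_apply_apply]
    have hAB : δ₁ = B := sq_uniq δ₁ B hδ₁ hBsym hpos₁ hBpos hBB
    have hσδ : ∀ y, σ (δ₁ y) = δ₂ (σ y) := by
      intro y
      rw [hAB, hBapp, σ.apply_symm_apply]
    refine ⟨σ, ?_, ?_⟩
    · intro a b
      have hEσ : ∀ x, E x = σ x := by
        intro x
        rw [hE, ← hσδ (d₁.symm x), hd₁s x]
      apply ext_inner_right ℝ
      intro v
      have hthis := R1 a b (σ.symm v)
      rw [hEσ, hEσ, hEσ, σ.apply_symm_apply] at hthis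
      calc (⟪σ (π a b), v⟫ : ℝ) = ⟪σ (π a b), σ (σ.symm v)⟫ := by
            rw [σ.apply_symm_apply]
        _ = ⟪π a b, σ.symm v⟫ := σ.inner_map_map _ _
        _ = ⟪π (σ a) (σ b), v⟫ := hthis.symm
    · intro x
      rw [hAB]
      exact hBapp x

  · rintro ⟨σ, hππ, hconj⟩
    refine ⟨σ, fun x y => ?_⟩
    have hc : ∀ z : V, σ (δ₁ z) = δ₂ (σ z) := by
      intro z
      rw [hconj z, σ.apply_symm_apply]
    rw [hc, hππ, hc, hc]
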